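/- Suppose A is unitary and block vectors V_k, Ṽ_k ∈ ℂ^{n×s} satisfy the coupled recurrences A V_k = V_{k+1} ρ^R_k + Ṽ_k α_k* and Ṽ_k = Ṽ_{k+1} ρ^L_k + A V_k α_k, with ρ^R_k α_k = α_k ρ^L_k. Then Ṽ_{k+1} = Ṽ_k ρ^L_k − V_{k+1} α_k. -/

import Mathlib

open Matrix BigOperators
open scoped ComplexOrder Matrix.Norms.L2Operator

lemma aux_isUnit_one_sub {s : ℕ} (α : Matrix (Fin s) (Fin s) ℂ) (hα : ‖α‖ < 1) :
    IsUnit (1 - αᴴ * α) := by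
  rw [Matrix.isUnit_iff_isUnit_det, isUnit_iff_ne_zero]
  intro hdet
  obtain ⟨v, hv, hveq⟩ := (Matrix.exists_mulVec_eq_zero_iff).2 hdet
  have hαnn : 0 ≤ ‖α‖ := norm_nonneg _
  have hv2 : v = αᴴ *ᵥ (α *ᵥ v) := by
    rw [Matrix.sub_mulVec, Matrix.one_mulVec, sub_eq_zero] at hveq
    rw [Matrix.mulVec_mulVec]; exact hveq
  set x : EuclideanSpace ℂ (Fin s) := (EuclideanSpace.equiv (Fin s) ℂ).symm v with hx
  have hxne : x ≠ 0 := by simpa [hx] using hv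
  have hb1 : ‖(EuclideanSpace.equiv (Fin s) ℂ).symm (α *ᵥ v)‖ ≤ ‖α‖ * ‖x‖ :=
    α.l2_opNorm_mulVec x
  have hb2 : ‖(EuclideanSpace.equiv (Fin s) ℂ).symm (αᴴ *ᵥ (α *ᵥ v))‖ ≤
      ‖αᴴ‖ * ‖(EuclideanSpace.equiv (Fin s) ℂ).symm (α *ᵥ v)‖ :=
    αᴴ.l2_opNorm_mulVec ((EuclideanSpace.equiv (Fin s) ℂ).symm (α *ᵥ v))
  have hxx : ‖x‖ ≤ ‖α‖ * (‖α‖ * ‖x‖) := by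
    calc ‖x‖ = ‖(EuclideanSpace.equiv (Fin s) ℂ).symm (αᴴ *ᵥ (α *ᵥ v))‖ := by
          rw [hx]; exact congrArg norm (congrArg _ hv2)
      _ ≤ ‖αᴴ‖ * ‖(EuclideanSpace.equiv (Fin s) ℂ).symm (α *ᵥ v)‖ := hb2
      _ ≤ ‖αᴴ‖ * (‖α‖ * ‖x‖) := mul_le_mul_of_nonneg_left hb1 (norm_nonneg _)
      _ = ‖α‖ * (‖α‖ * ‖x‖) := by rw [α.l2_opNorm_conjTranspose]
  have hxpos : 0 < ‖x‖ := norm_pos_iff.2 hxne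
  have ha1 : ‖α‖ * ‖x‖ < 1 * ‖x‖ := mul_lt_mul_of_pos_right hα hxpos
  have ha2 : ‖α‖ * (‖α‖ * ‖x‖) ≤ 1 * (‖α‖ * ‖x‖) :=
    mul_le_mul_of_nonneg_right hα.le (by positivity)
  nlinarith

/-- Suppose `A` is unitary and the block vectors `V_k, Ṽ_k` satisfy the
coupled Szegő recurrences `A V_k = V_{k+1} ρ^R_k + Ṽ_k α_k*` and
`Ṽ_k = Ṽ_{k+1} ρ^L_k + A V_k α_k`, where `‖α_k‖₂ < 1`,
`ρ^R_k = (I-α_kα_k*)^{1/2}`, `ρ^L_k = (I-α_k*α_k)^{1/2}` and `ρ^R_k α_k = α_k ρ^L_k`.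
Then `Ṽ_{k+1} = Ṽ_k ρ^L_k - V_{k+1} α_k`. -/
theorem tilde_v_recursion
    {n s : ℕ} (A : Matrix (Fin n) (Fin n) ℂ)
    (hA : Aᴴ * A = 1) (hA' : A * Aᴴ = 1)
    (V W V' W' : Matrix (Fin n) (Fin s) ℂ)  -- V = V_k, V' = V_{k+1}, W = Ṽ_k, W' = Ṽ_{k+1}
    (α ρR ρL : Matrix (Fin s) (Fin s) ℂ) (hα : ‖α‖ < 1)
    (hρR : ρR.PosSemidef ∧ ρR * ρR = 1 - α * αᴴ)
    (hρL : ρL.PosSemidef ∧ ρL * ρL = 1 - αᴴ * α)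
    (hint : ρR * α = α * ρL)
    (h1 : A * V = V' * ρR + W * αᴴ)
    (h2 : W = W' * ρL + (A * V) * α) :
    W' = W * ρL - V' * α := by
  obtain ⟨u, hu⟩ := aux_isUnit_one_sub α hα
  set D : Matrix (Fin s) (Fin s) ℂ := ρL * (↑u⁻¹ : Matrix (Fin s) (Fin s) ℂ) with hD
  have hρLD : ρL * D = 1 := by
    rw [hD, ← Matrix.mul_assoc, hρL.2, ← hu]
    exact u.mul_inv
  have hWα : W * αᴴ = A * V - V' * ρR := by rw [h1]; abel
  have key : (W * ρL) * ρL = (W' + V' * α) * ρL := by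
    calc (W * ρL) * ρL = W * (ρL * ρL) := Matrix.mul_assoc _ _ _
      _ = W - (W * αᴴ) * α := by
          rw [hρL.2, Matrix.mul_sub, Matrix.mul_one, Matrix.mul_assoc]
      _ = W - ((A * V) - V' * ρR) * α := by rw [hWα]
      _ = W - (A * V) * α + V' * (ρR * α) := by
          rw [Matrix.sub_mul, Matrix.mul_assoc V' ρR α]; abel
      _ = W' * ρL + V' * (α * ρL) := by
          rw [hint, h2]; abel
      _ = (W' + V' * α) * ρL := by
          rw [Matrix.add_mul, Matrix.mul_assoc V' α ρL]
  have hcancel : W * ρL = W' + V' * α := by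
    calc W * ρL = (W * ρL) * (ρL * D) := by rw [hρLD, Matrix.mul_one]
      _ = ((W * ρL) * ρL) * D := (Matrix.mul_assoc _ _ _).symm
      _ = ((W' + V' * α) * ρL) * D := by rw [key]
      _ = (W' + V' * α) * (ρL * D) := Matrix.mul_assoc _ _ _
      _ = W' + V' * α := by rw [hρLD, Matrix.mul_one]
  rw [hcancel]; abel
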